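/- arXiv:0705.1690 — 4 statements merged into one kernel-verified Lean document; each statement's English description precedes it below -/
import Mathlib

section
/- There exists an absolute constant C_0 > 0 such that for every irrational x ∈ (0,1) and every N ≥ 0, | Σ_{n=0}^{N} β*_{n−1}·log(1/x_n) − Σ_{n=0}^{N} log(b_{n+1} − 1)/q*_n | < C_0. In particular, B_0(x) and Σ_{n=0}^∞ log(b_{n+1} − 1)/q*_n are simultaneously finite or infinite, and when finite they differ by at most C_0. -/
open Set Filter
open scoped ENNReal

/-- The by-excess continued fraction map `A_0(x) = ⌊1/x + 1⌋ − 1/x`. -/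
noncomputable def exm (x : ℝ) : ℝ := ⌊1 / x + 1⌋ - 1 / x

/-- `bEx x n = b_{n+1} = ⌊1/A_0^n(x) + 1⌋`, the by-excess digits of `x`. -/
noncomputable def bEx (x : ℝ) (n : ℕ) : ℤ := ⌊1 / (exm^[n] x) + 1⌋

/-- `qstar x (n+1) = q*_n`, with `q*_{-1} = 0`, `q*_0 = 1` and
`q*_n = b_n·q*_{n−1} − q*_{n−2}`. -/
noncomputable def qstar (x : ℝ) : ℕ → ℤ
  | 0 => 0
  | 1 => 1
  | n + 2 => bEx x n * qstar x (n + 1) - qstar x n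

/-- The semi-Brjuno function `B_0(x) = ∑_{n≥0} β*_{n−1}·log(1/x_n) ∈ [0,∞]`
for `x ∈ (0,1)`, where `x_n = A_0^n(x)` and `β*_{n−1} = x_0⋯x_{n−1}`. -/
noncomputable def semiB (x : ℝ) : ℝ≥0∞ :=
  ∑' n : ℕ, ENNReal.ofReal ((∏ i ∈ Finset.range n, exm^[i] x) * Real.log (1 / (exm^[n] x)))

lemma log_le_mul_log_two' {t : ℝ} (ht : 2 ≤ t) : Real.log t ≤ (t - 1) * Real.log 2 := by
  have h2 : (0:ℝ) < t / 2 := by linarith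
  have h3 : Real.log (t / 2) ≤ t / 2 - 1 := Real.log_le_sub_one_of_pos h2
  have h4 : Real.log (t / 2) = Real.log t - Real.log 2 :=
    Real.log_div (by linarith) (by norm_num)
  have h5 : (0.6931471803 : ℝ) < Real.log 2 := Real.log_two_gt_d9
  nlinarith [h3, h4, h5]

lemma exm_step {y : ℝ} (h0 : 0 < y) (h1 : y < 1) (hirr : Irrational y) :
    0 < exm y ∧ exm y < 1 ∧ Irrational (exm y) := by
  have hy1 : 1 < 1 / y := (one_lt_div h0).2 h1
  have hirr' : Irrational (1 / y) := by rw [one_div]; exact hirr.inv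
  have hfl : (⌊1 / y⌋ : ℝ) < 1 / y :=
    lt_of_le_of_ne (Int.floor_le _) (Ne.symm (hirr'.ne_int _))
  have hfu : 1 / y < (⌊1 / y⌋ : ℝ) + 1 := Int.lt_floor_add_one _
  have heq : exm y = (⌊1 / y⌋ : ℝ) + 1 - 1 / y := by
    unfold exm
    rw [Int.floor_add_one]
    push_cast
    ring
  refine ⟨by rw [heq]; linarith, by rw [heq]; linarith, ?_⟩
  have : Irrational (((⌊1 / y⌋ + 1 : ℤ) : ℝ) - 1 / y) := hirr'.intCast_sub _
  rw [heq]
  convert this using 2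
  push_cast
  ring

section
variable {x : ℝ} (h0 : 0 < x) (h1 : x < 1) (hirr : Irrational x)
include h0 h1 hirr

lemma iter_mem : ∀ n : ℕ, 0 < exm^[n] x ∧ exm^[n] x < 1 ∧ Irrational (exm^[n] x) := by
  intro n
  induction n with
  | zero => exact ⟨h0, h1, hirr⟩
  | succ n ih =>
    rw [Function.iterate_succ_apply']
    exact exm_step ih.1 ih.2.1 ih.2.2

omit h0 h1 hirr in
lemma bEx_eq (n : ℕ) : (bEx x n : ℝ) = 1 / exm^[n] x + exm^[n+1] x := by
  rw [Function.iterate_succ_apply']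
  unfold bEx exm
  ring

lemma bEx_two_le (n : ℕ) : (2 : ℤ) ≤ bEx x n := by
  have h := iter_mem h0 h1 hirr n
  have : 1 < 1 / exm^[n] x := (one_lt_div h.1).2 h.2.1
  unfold bEx
  have : (2:ℝ) ≤ 1 / exm^[n] x + 1 := by linarith
  exact_mod_cast Int.le_floor.2 (by exact_mod_cast this)

lemma qstar_facts : ∀ n : ℕ, 0 ≤ qstar x n ∧ qstar x n < qstar x (n + 1) := by
  intro n
  induction n with
  | zero => simp [qstar]
  | succ n ih =>
    have hb := bEx_two_le h0 h1 hirr n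
    have hq2 : qstar x (n + 2) = bEx x n * qstar x (n + 1) - qstar x n := rfl
    have hq1 : 1 ≤ qstar x (n + 1) := by omega
    constructor
    · omega
    · rw [hq2]
      nlinarith [mul_nonneg (by omega : (0:ℤ) ≤ bEx x n - 2) (by omega : (0:ℤ) ≤ qstar x (n+1))]

lemma qstar_one_le (n : ℕ) : 1 ≤ qstar x (n + 1) := by
  have := qstar_facts h0 h1 hirr n
  omega

lemma qstar_dbl (n : ℕ) (hb3 : 3 ≤ bEx x n) : 2 * qstar x (n + 1) ≤ qstar x (n + 2) := by
  have h1' := qstar_facts h0 h1 hirr n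
  have hq2 : qstar x (n + 2) = bEx x n * qstar x (n + 1) - qstar x n := rfl
  rw [hq2]
  nlinarith [mul_nonneg (by omega : (0:ℤ) ≤ bEx x n - 3) (by omega : (0:ℤ) ≤ qstar x (n+1))]

lemma qstar_gap (n : ℕ) : (bEx x n - 2) * qstar x (n + 1) ≤ qstar x (n + 2) - qstar x (n + 1) := by
  have h1' := qstar_facts h0 h1 hirr n
  have hb := bEx_two_le h0 h1 hirr n
  have hq2 : qstar x (n + 2) = bEx x n * qstar x (n + 1) - qstar x n := rfl
  rw [hq2]
  nlinarith [h1'.1, h1'.2]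

lemma beta_id : ∀ n : ℕ,
    (∏ i ∈ Finset.range n, exm^[i] x) * ((qstar x (n + 1) : ℝ) - (qstar x n : ℝ) * exm^[n] x) = 1 := by
  intro n
  induction n with
  | zero => simp [qstar]
  | succ n ih =>
    have hu0 : exm^[n] x ≠ 0 := (iter_mem h0 h1 hirr n).1.ne'
    have hq2 : qstar x (n + 2) = bEx x n * qstar x (n + 1) - qstar x n := rfl
    have hcast : (qstar x (n + 2) : ℝ) = (bEx x n : ℝ) * (qstar x (n + 1) : ℝ) - (qstar x n : ℝ) := by
      rw [hq2]; push_cast; ring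
    rw [Finset.prod_range_succ, show n + 1 + 1 = n + 2 from rfl, hcast, bEx_eq]
    have key : exm^[n] x * (((1 / exm^[n] x + exm^[n+1] x) * (qstar x (n + 1) : ℝ) -
        (qstar x n : ℝ)) - (qstar x (n + 1) : ℝ) * exm^[n+1] x)
        = (qstar x (n + 1) : ℝ) - (qstar x n : ℝ) * exm^[n] x := by
      field_simp
      ring
    calc (∏ i ∈ Finset.range n, exm^[i] x) * exm^[n] x *
          (((1 / exm^[n] x + exm^[n+1] x) * (qstar x (n + 1) : ℝ) - (qstar x n : ℝ)) -
            (qstar x (n + 1) : ℝ) * exm^[n+1] x)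
        = (∏ i ∈ Finset.range n, exm^[i] x) *
            ((qstar x (n + 1) : ℝ) - (qstar x n : ℝ) * exm^[n] x) := by
          rw [mul_assoc, key]
      _ = 1 := ih

end

lemma core_nonneg (u b p q qm : ℝ)
    (hu0 : 0 < u) (hv0' : b - 1 < 1/u)
    (hb2 : 2 ≤ b) (hq0 : 1 ≤ q) (hqm0 : 0 ≤ qm)
    (hbeta : p * (q - qm * u) = 1) (hppos : 0 < p) :
    0 ≤ p * Real.log (1/u) - Real.log (b - 1) / q := by
  have hqpos : (0:ℝ) < q := by linarith
  have hb1 : (1:ℝ) ≤ b - 1 := by linarith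
  have hmono : Real.log (b - 1) ≤ Real.log (1/u) := Real.log_le_log (by linarith) hv0'.le
  have hlogb1 : 0 ≤ Real.log (b - 1) := Real.log_nonneg hb1
  have hlog1u : 0 ≤ Real.log (1/u) := le_trans hlogb1 hmono
  have hp : 1/q ≤ p := by
    rw [div_le_iff₀ hqpos]
    nlinarith [hbeta, mul_nonneg (mul_nonneg hppos.le hqm0) hu0.le]
  have h1 : Real.log (b - 1) / q ≤ (1/q) * Real.log (1/u) := by
    rw [div_eq_mul_one_div, mul_comm]
    exact mul_le_mul_of_nonneg_left hmono (by positivity)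
  have h2 : (1/q) * Real.log (1/u) ≤ p * Real.log (1/u) :=
    mul_le_mul_of_nonneg_right hp hlog1u
  linarith

lemma core_bound (u v b p q q' qm L : ℝ)
    (hu0 : 0 < u) (hv0 : 0 < v) (hv1 : v < 1)
    (hb : 1/u = b - v) (hb2 : 2 ≤ b)
    (hq0 : 1 ≤ q) (hqlt : q < q') (hqm0 : 0 ≤ qm) (hqmlt : qm ≤ q)
    (hbeta : p * (q - qm * u) = 1)
    (hbeta' : (p * u) * (q' - q * v) = 1)
    (hgap : (b - 2) * q ≤ q' - q)
    (hppos : 0 < p)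
    (hcase : b = 2 ∨ (3 ≤ b ∧ 2 * q ≤ q'))
    (hL : L = Real.log 2) :
    p * Real.log (1/u) - Real.log (b - 1) / q ≤
      (2 * (p * u) + 2 * L / q) - (2 * (p * u * v) + 2 * L / q') := by
  have hqpos : (0:ℝ) < q := by linarith
  have hq'pos : (0:ℝ) < q' := by linarith
  have hb1pos : (0:ℝ) < b - 1 := by linarith
  have hu' : (0:ℝ) < 1/u := by positivity
  have hLpos : 0 < L := hL ▸ Real.log_pos (by norm_num)
  have hlogb1 : 0 ≤ Real.log (b - 1) := Real.log_nonneg (by linarith)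
  have hpu_pos : 0 < p * u := mul_pos hppos hu0
  have hub : u * (b - v) = 1 := by
    rw [← hb]; field_simp
  -- Part A
  have hA : p * (Real.log (1/u) - Real.log (b - 1)) ≤ 2 * (p * u) - 2 * (p * u * v) := by
    have hdiv : Real.log (1/u) - Real.log (b - 1) = Real.log ((1/u) / (b - 1)) :=
      (Real.log_div (ne_of_gt hu') (ne_of_gt hb1pos)).symm
    have hle : Real.log ((1/u) / (b - 1)) ≤ (1/u) / (b - 1) - 1 :=
      Real.log_le_sub_one_of_pos (by positivity)
    have heq : (1/u) / (b - 1) - 1 = (1 - v) / (b - 1) := by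
      rw [hb]
      field_simp
      ring
    have hA1 : Real.log (1/u) - Real.log (b - 1) ≤ (1 - v) / (b - 1) := by
      rw [hdiv, ← heq]; exact hle
    have hA2 : p * ((1 - v) / (b - 1)) ≤ 2 * (p * u) - 2 * (p * u * v) := by
      rw [mul_div_assoc', div_le_iff₀ hb1pos]
      have hident : (2 * (p * u) - 2 * (p * u * v)) * (b - 1) - p * (1 - v) =
          p * (1 - v) * (u * (b - 2 + v)) + p * (1 - v) * (u * (b - v) - 1) := by ring
      have h0 : u * (b - v) - 1 = 0 := by linarith [hub]
      rw [h0, mul_zero, add_zero] at hident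
      have hnn : 0 ≤ p * (1 - v) * (u * (b - 2 + v)) :=
        mul_nonneg (mul_nonneg hppos.le (by linarith)) (mul_nonneg hu0.le (by linarith))
      linarith [hident, hnn]
    calc p * (Real.log (1/u) - Real.log (b - 1))
        ≤ p * ((1 - v) / (b - 1)) := mul_le_mul_of_nonneg_left hA1 hppos.le
      _ ≤ 2 * (p * u) - 2 * (p * u * v) := hA2
  -- Part B
  have hBle : p - 1/q ≤ p * u := by
    have hpq : p * q ≤ 1 + (p * u) * q := by
      nlinarith [hbeta, hqmlt, hpu_pos]
    have h' : p ≤ (1 + (p * u) * q) / q := by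
      rw [le_div_iff₀ hqpos]; exact hpq
    have h'' : (1 + (p * u) * q) / q = 1/q + p * u := by
      field_simp
    linarith [h'.trans_eq h'']
  have hBub : (p - 1/q) * Real.log (b - 1) ≤ 2 * L / q - 2 * L / q' := by
    rcases hcase with h2 | ⟨h3, hdq⟩
    · have hq'le : 2 * L / q' ≤ 2 * L / q :=
        div_le_div_of_nonneg_left (by positivity) hqpos hqlt.le
      rw [h2]
      norm_num
      linarith
    · have hlb : Real.log (b - 1) ≤ (b - 2) * L := by
        have h := log_le_mul_log_two' (show (2:ℝ) ≤ b - 1 by linarith)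
        rw [hL]; nlinarith [h]
      have hpr : (p * u) * (q' - q) ≤ 1 := by
        have hid2 : (p * u) * (q' - q * v) - (p * u) * (q' - q) = (p * u) * (q * (1 - v)) := by
          ring
        have hnn2 : 0 ≤ (p * u) * (q * (1 - v)) :=
          mul_nonneg hpu_pos.le (mul_nonneg hqpos.le (by linarith))
        linarith [hbeta', hid2, hnn2]
      have hprq : (p * u) * ((b - 2) * q) ≤ 1 :=
        le_trans (mul_le_mul_of_nonneg_left hgap hpu_pos.le) hpr
      have step1 : (p - 1/q) * Real.log (b - 1) ≤ (p * u) * ((b - 2) * L) :=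
        mul_le_mul hBle hlb hlogb1 hpu_pos.le
      have step2 : (p * u) * ((b - 2) * L) ≤ L / q := by
        rw [le_div_iff₀ hqpos]
        nlinarith [mul_le_mul_of_nonneg_left hprq hLpos.le]
      have step3 : L / q ≤ 2 * L / q - 2 * L / q' := by
        have hs : 2 * L / q' ≤ 2 * L / (2 * q) :=
          div_le_div_of_nonneg_left (by positivity) (by positivity) hdq
        have hs2 : 2 * L / (2 * q) = L / q := mul_div_mul_left L q two_ne_zero
        have hs3 : 2 * L / q' ≤ L / q := hs.trans_eq hs2
        ring_nf
        ring_nf at hs3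
        linarith
      linarith
  have hsplit : p * Real.log (1/u) - Real.log (b - 1) / q =
      p * (Real.log (1/u) - Real.log (b - 1)) + (p - 1/q) * Real.log (b - 1) := by
    ring
  rw [hsplit]
  linarith [hA, hBub]

/-- Theorem 2.11: there is an absolute constant `C_0 > 0` such that for every
irrational `x ∈ (0,1)` and every `N ≥ 0`,
`|∑_{n=0}^{N} β*_{n−1}·log(1/x_n) − ∑_{n=0}^{N} log(b_{n+1} − 1)/q*_n| < C_0`. -/
theorem semiB_close_to_q_series :
    ∃ C : ℝ, 0 < C ∧ ∀ x : ℝ, Irrational x → x ∈ Set.Ioo (0 : ℝ) 1 → ∀ N : ℕ,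
      |∑ n ∈ Finset.range (N + 1),
          (∏ i ∈ Finset.range n, exm^[i] x) * Real.log (1 / (exm^[n] x)) -
        ∑ n ∈ Finset.range (N + 1),
          Real.log ((bEx x n : ℝ) - 1) / (qstar x (n + 1) : ℝ)| < C := by
  refine ⟨4, by norm_num, ?_⟩
  intro x hirr hx N
  obtain ⟨hx0, hx1⟩ := hx
  have hI := iter_mem hx0 hx1 hirr
  have hppos : ∀ n : ℕ, 0 < ∏ i ∈ Finset.range n, exm^[i] x :=
    fun n => Finset.prod_pos (fun i _ => (hI i).1)
  have hcase : ∀ n : ℕ, (bEx x n : ℝ) = 2 ∨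
      (3 ≤ (bEx x n : ℝ) ∧ 2 * (qstar x (n+1) : ℝ) ≤ (qstar x (n+2) : ℝ)) := by
    intro n
    by_cases h3 : 3 ≤ bEx x n
    · right
      exact ⟨by exact_mod_cast h3, by exact_mod_cast qstar_dbl hx0 hx1 hirr n h3⟩
    · left
      have h2 := bEx_two_le hx0 hx1 hirr n
      have : bEx x n = 2 := by omega
      exact_mod_cast this
  set g : ℕ → ℝ := fun n =>
    2 * (∏ i ∈ Finset.range (n+1), exm^[i] x) + 2 * Real.log 2 / (qstar x (n+1) : ℝ) with hg
  have hterm : ∀ n : ℕ, (∏ i ∈ Finset.range n, exm^[i] x) * Real.log (1 / exm^[n] x) -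
      Real.log ((bEx x n : ℝ) - 1) / (qstar x (n+1) : ℝ) ≤ g n - g (n+1) := by
    intro n
    have hb := bEx_eq (x := x) n
    have h1u : 1 / exm^[n] x = (bEx x n : ℝ) - exm^[n+1] x := by linarith [hb]
    have hbeta := beta_id hx0 hx1 hirr n
    have hbeta' := beta_id hx0 hx1 hirr (n+1)
    rw [Finset.prod_range_succ] at hbeta'
    have hgeq : g n - g (n+1) =
        (2 * ((∏ i ∈ Finset.range n, exm^[i] x) * exm^[n] x) +
          2 * Real.log 2 / (qstar x (n+1) : ℝ)) -
        (2 * ((∏ i ∈ Finset.range n, exm^[i] x) * exm^[n] x * exm^[n+1] x) +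
          2 * Real.log 2 / (qstar x (n+2) : ℝ)) := by
      simp only [hg]
      rw [Finset.prod_range_succ (fun i => exm^[i] x) (n+1),
        Finset.prod_range_succ (fun i => exm^[i] x) n]
    rw [hgeq]
    exact core_bound (exm^[n] x) (exm^[n+1] x) ((bEx x n : ℝ))
      (∏ i ∈ Finset.range n, exm^[i] x) ((qstar x (n+1) : ℝ)) ((qstar x (n+2) : ℝ))
      ((qstar x n : ℝ)) (Real.log 2)
      (hI n).1 (hI (n+1)).1 (hI (n+1)).2.1 h1u
      (by exact_mod_cast bEx_two_le hx0 hx1 hirr n)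
      (by exact_mod_cast qstar_one_le hx0 hx1 hirr n)
      (by exact_mod_cast (qstar_facts hx0 hx1 hirr (n+1)).2)
      (by exact_mod_cast (qstar_facts hx0 hx1 hirr n).1)
      (by exact_mod_cast (qstar_facts hx0 hx1 hirr n).2.le)
      hbeta hbeta'
      (by exact_mod_cast qstar_gap hx0 hx1 hirr n)
      (hppos n) (hcase n) rfl
  have hnn : ∀ n ∈ Finset.range (N+1),
      0 ≤ (∏ i ∈ Finset.range n, exm^[i] x) * Real.log (1 / exm^[n] x) -
        Real.log ((bEx x n : ℝ) - 1) / (qstar x (n+1) : ℝ) := by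
    intro n _
    have hb := bEx_eq (x := x) n
    refine core_nonneg (exm^[n] x) ((bEx x n : ℝ)) (∏ i ∈ Finset.range n, exm^[i] x)
      ((qstar x (n+1) : ℝ)) ((qstar x n : ℝ)) (hI n).1 ?_
      (by exact_mod_cast bEx_two_le hx0 hx1 hirr n)
      (by exact_mod_cast qstar_one_le hx0 hx1 hirr n)
      (by exact_mod_cast (qstar_facts hx0 hx1 hirr n).1)
      (beta_id hx0 hx1 hirr n) (hppos n)
    have := (hI (n+1)).2.1
    linarith
  rw [← Finset.sum_sub_distrib]
  have hup : ∑ n ∈ Finset.range (N+1),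
      ((∏ i ∈ Finset.range n, exm^[i] x) * Real.log (1 / exm^[n] x) -
        Real.log ((bEx x n : ℝ) - 1) / (qstar x (n+1) : ℝ)) ≤ g 0 - g (N+1) := by
    calc ∑ n ∈ Finset.range (N+1),
        ((∏ i ∈ Finset.range n, exm^[i] x) * Real.log (1 / exm^[n] x) -
          Real.log ((bEx x n : ℝ) - 1) / (qstar x (n+1) : ℝ))
        ≤ ∑ n ∈ Finset.range (N+1), (g n - g (n+1)) :=
          Finset.sum_le_sum (fun n _ => hterm n)
      _ = g 0 - g (N+1) := Finset.sum_range_sub' g (N+1)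
  have hg0 : g 0 = 2 * x + 2 * Real.log 2 := by
    simp only [hg]
    norm_num [Finset.prod_range_one, qstar]
  have hgpos : 0 < g (N+1) := by
    simp only [hg]
    have h1 : 0 < ∏ i ∈ Finset.range (N+1+1), exm^[i] x := hppos _
    have h2 : (0:ℝ) < (qstar x (N+1+1) : ℝ) := by
      have := qstar_one_le hx0 hx1 hirr (N+1)
      exact_mod_cast lt_of_lt_of_le Int.zero_lt_one this
    have hL : (0:ℝ) < Real.log 2 := Real.log_pos (by norm_num)
    have := div_pos (by linarith : (0:ℝ) < 2 * Real.log 2) h2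
    nlinarith
  have hlow : 0 ≤ ∑ n ∈ Finset.range (N+1),
      ((∏ i ∈ Finset.range n, exm^[i] x) * Real.log (1 / exm^[n] x) -
        Real.log ((bEx x n : ℝ) - 1) / (qstar x (n+1) : ℝ)) := Finset.sum_nonneg hnn
  have hlog2 : Real.log 2 < 1 := by
    nlinarith [Real.log_two_lt_d9]
  rw [abs_lt]
  refine ⟨by linarith, lt_of_le_of_lt hup ?_⟩
  rw [hg0]
  linarith
end

section
/- For every irrational x ∈ (0,1), the sum of β*_{n−1}·log(1/x_n) over all n ≥ 0 with x_n > 1/2 (equivalently, with b_{n+1} = 2) is at most 2; i.e. Σ_{n ≥ 0, x_n > 1/2} β*_{n−1}·log(1/x_n) ≤ 2. -/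
open Set Filter
open scoped ENNReal

lemma exm_step_s16 {y : ℝ} (hy : Irrational y) (h : y ∈ Set.Ioo (0:ℝ) 1) :
    Irrational (exm y) ∧ exm y ∈ Set.Ioo (0:ℝ) 1 := by
  have hy0 : (0:ℝ) < y := h.1
  have hinv : Irrational (1 / y) := by simp only [one_div]; exact hy.inv
  have hfr0 : 0 < Int.fract (1 / y) := by
    rcases lt_or_eq_of_le (Int.fract_nonneg (1 / y)) with h' | h'
    · exact h'
    · exfalso
      have : (1 / y) = (⌊1 / y⌋ : ℝ) := by
        have := h'.symm
        rw [Int.fract] at this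
        linarith
      exact hinv.ne_int ⌊1 / y⌋ this
  have hfr1 : Int.fract (1 / y) < 1 := Int.fract_lt_one _
  have hval : exm y = 1 - Int.fract (1 / y) := by
    rw [exm, Int.fract]
    have : (⌊1 / y + 1⌋ : ℤ) = ⌊1 / y⌋ + 1 := by
      simpa using Int.floor_add_int (1 / y) 1
    rw [this]
    push_cast
    ring
  constructor
  · have : Irrational ((⌊1 / y + 1⌋ : ℤ) - 1 / y) := hinv.intCast_sub _
    simpa [exm] using this
  · rw [hval]; constructor <;> linarith

/-- For every irrational `x ∈ (0,1)`, the sum of `β*_{n−1}·log(1/x_n)` over all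
`n ≥ 0` with `x_n > 1/2` (equivalently `b_{n+1} = 2`) is at most `2`. Here
`x_n = A_0^n(x)` and `β*_{n−1} = x_0⋯x_{n−1}`. -/
theorem sum_over_large_orbit_le_two (x : ℝ) (hirr : Irrational x)
    (hx : x ∈ Set.Ioo (0 : ℝ) 1) :
    (∑' n : ℕ, if (1 / 2 : ℝ) < exm^[n] x then
        ENNReal.ofReal ((∏ i ∈ Finset.range n, exm^[i] x) * Real.log (1 / (exm^[n] x)))
      else 0) ≤ 2 := by
  set F : ℕ → ℝ := fun n => exm^[n] x with hF
  have horb : ∀ n, Irrational (F n) ∧ F n ∈ Set.Ioo (0:ℝ) 1 := by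
    intro n
    induction n with
    | zero => exact ⟨hirr, hx⟩
    | succ k ih =>
      have : F (k+1) = exm (F k) := by
        simp [hF, Function.iterate_succ_apply']
      rw [this]
      exact exm_step_s16 ih.1 ih.2
  set P : ℕ → ℝ := fun n => ∏ i ∈ Finset.range n, F i with hP
  have hPpos : ∀ n, 0 < P n := fun n =>
    Finset.prod_pos fun i _ => (horb i).2.1
  have hPsucc : ∀ n, P (n+1) = P n * F n := fun n => Finset.prod_range_succ F n
  have hPdec : ∀ n, P (n+1) ≤ P n := by
    intro n
    rw [hPsucc]
    nlinarith [hPpos n, (horb n).2.1, (horb n).2.2]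
  -- pointwise bound
  have hterm : ∀ n, (if (1 / 2 : ℝ) < F n then
      ENNReal.ofReal (P n * Real.log (1 / F n)) else 0)
      ≤ ENNReal.ofReal (2 * (P n - P (n+1))) := by
    intro n
    split_ifs with hc
    · apply ENNReal.ofReal_le_ofReal
      have h0 : 0 < F n := (horb n).2.1
      have h1 : F n < 1 := (horb n).2.2
      have hlog : Real.log (1 / F n) ≤ 2 * (1 - F n) := by
        have hle : Real.log (1 / F n) ≤ 1 / F n - 1 :=
          Real.log_le_sub_one_of_pos (by positivity)
        have h2 : 1 / F n - 1 ≤ 2 * (1 - F n) := by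
          rw [sub_le_iff_le_add, div_le_iff₀ h0]
          nlinarith
        linarith
      have := mul_le_mul_of_nonneg_left hlog (le_of_lt (hPpos n))
      rw [hPsucc]
      nlinarith [hPpos n]
    · exact zero_le
  -- bound tsum by telescoping
  rw [ENNReal.tsum_eq_iSup_sum]
  apply iSup_le
  intro s
  obtain ⟨N, hN⟩ := s.exists_nat_subset_range
  calc (∑ n ∈ s, if (1 / 2 : ℝ) < F n then
          ENNReal.ofReal (P n * Real.log (1 / F n)) else 0)
      ≤ ∑ n ∈ Finset.range N, (if (1 / 2 : ℝ) < F n then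
          ENNReal.ofReal (P n * Real.log (1 / F n)) else 0) :=
        Finset.sum_le_sum_of_subset hN
    _ ≤ ∑ n ∈ Finset.range N, ENNReal.ofReal (2 * (P n - P (n+1))) :=
        Finset.sum_le_sum fun n _ => hterm n
    _ = ENNReal.ofReal (∑ n ∈ Finset.range N, 2 * (P n - P (n+1))) := by
        rw [ENNReal.ofReal_sum_of_nonneg]
        intro n _
        have := hPdec n
        linarith
    _ ≤ 2 := by
        rw [← Finset.mul_sum, Finset.sum_range_sub' P]
        have h2 : 2 * (P 0 - P N) ≤ 2 := by
          have := hPpos N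
          have hP0 : P 0 = 1 := by simp [hP]
          nlinarith
        calc ENNReal.ofReal (2 * (P 0 - P N)) ≤ ENNReal.ofReal 2 :=
              ENNReal.ofReal_le_ofReal h2
          _ = 2 := by norm_num
end

section
/- Let x ∈ (0,1) be irrational and let t_1 < t_2 < ⋯ be the increasing enumeration of the (infinite) set {n ≥ 0 : b_{n+1} ≥ 3}. Then q*_{t_{k+1}} ≥ 2·q*_{t_k} for all k ≥ 1, and consequently Σ_{n ≥ 0, b_{n+1} ≥ 3} 1/q*_n ≤ 2. -/
open Set Filter
open scoped ENNReal

lemma exm_step_s17 {x : ℝ} (hirr : Irrational x) (hx : x ∈ Set.Ioo (0 : ℝ) 1) :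
    Irrational (exm x) ∧ exm x ∈ Set.Ioo (0 : ℝ) 1 := by
  obtain ⟨hx0, hx1⟩ := hx
  have hy : Irrational (1 / x) := by
    rw [one_div]; exact hirr.inv
  constructor
  · unfold exm
    exact hy.intCast_sub _
  · have hfl : (⌊1/x⌋ : ℝ) < 1/x := by
      rcases lt_or_eq_of_le (Int.floor_le (1/x)) with h | h
      · exact h
      · exact absurd h.symm (hy.ne_int _)
    have hfu : 1/x < ⌊1/x⌋ + 1 := Int.lt_floor_add_one _
    have : ⌊1/x + 1⌋ = ⌊1/x⌋ + 1 := by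
      rw [Int.floor_add_one]
    constructor
    · unfold exm
      rw [this]
      push_cast
      linarith
    · unfold exm
      rw [this]
      push_cast
      linarith

lemma exm_iter {x : ℝ} (hirr : Irrational x) (hx : x ∈ Set.Ioo (0 : ℝ) 1) (n : ℕ) :
    Irrational (exm^[n] x) ∧ exm^[n] x ∈ Set.Ioo (0 : ℝ) 1 := by
  induction n with
  | zero => exact ⟨hirr, hx⟩
  | succ n ih =>
    rw [Function.iterate_succ_apply']
    exact exm_step_s17 ih.1 ih.2

lemma bEx_ge_two {x : ℝ} (hirr : Irrational x) (hx : x ∈ Set.Ioo (0 : ℝ) 1) (n : ℕ) :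
    2 ≤ bEx x n := by
  obtain ⟨_, h0, h1⟩ := exm_iter hirr hx n
  have : (1 : ℝ) < 1 / (exm^[n] x) := by
    rw [lt_div_iff₀ h0]; linarith
  unfold bEx
  have : (2 : ℝ) ≤ 1 / (exm^[n] x) + 1 := by linarith
  exact_mod_cast Int.le_floor.mpr (by exact_mod_cast this)

lemma qstar_facts_s17 {x : ℝ} (hirr : Irrational x) (hx : x ∈ Set.Ioo (0 : ℝ) 1) (n : ℕ) :
    0 ≤ qstar x n ∧ qstar x n + 1 ≤ qstar x (n + 1) := by
  induction n with
  | zero => simp [qstar]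
  | succ n ih =>
    obtain ⟨h0, h1⟩ := ih
    have hb := bEx_ge_two hirr hx n
    have hq1 : 1 ≤ qstar x (n + 1) := by linarith
    refine ⟨by linarith, ?_⟩
    show qstar x (n + 1) + 1 ≤ bEx x n * qstar x (n + 1) - qstar x n
    nlinarith

lemma qstar_mono {x : ℝ} (hirr : Irrational x) (hx : x ∈ Set.Ioo (0 : ℝ) 1) :
    Monotone (qstar x) :=
  monotone_nat_of_le_succ fun n => by linarith [(qstar_facts_s17 hirr hx n).2]

lemma qstar_double {x : ℝ} (hirr : Irrational x) (hx : x ∈ Set.Ioo (0 : ℝ) 1)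
    {n : ℕ} (hb : 3 ≤ bEx x n) : 2 * qstar x (n + 1) ≤ qstar x (n + 2) := by
  obtain ⟨h0, h1⟩ := qstar_facts_s17 hirr hx n
  have hq1 : 1 ≤ qstar x (n + 1) := by linarith
  show 2 * qstar x (n + 1) ≤ bEx x n * qstar x (n + 1) - qstar x n
  nlinarith

/-- Let `x ∈ (0,1)` be irrational and let `t_1 < t_2 < ⋯` enumerate the (infinite)
set `{n ≥ 0 : b_{n+1} ≥ 3}` (here `t k` is the paper's `t_{k+1}`). Then
`q*_{t_{k+1}} ≥ 2·q*_{t_k}` for all `k ≥ 1`, and consequently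
`∑_{n ≥ 0, b_{n+1} ≥ 3} 1/q*_n ≤ 2`. -/
theorem qstar_doubling_and_sum_le_two (x : ℝ) (hirr : Irrational x)
    (hx : x ∈ Set.Ioo (0 : ℝ) 1) (t : ℕ → ℕ) (hmono : StrictMono t)
    (hmem : ∀ k, 3 ≤ bEx x (t k))
    (hall : ∀ n : ℕ, 3 ≤ bEx x n → ∃ k, t k = n) :
    (∀ k : ℕ, 2 * qstar x (t k + 1) ≤ qstar x (t (k + 1) + 1)) ∧
      (∑' n : ℕ, if 3 ≤ bEx x n then ENNReal.ofReal (1 / (qstar x (n + 1) : ℝ)) else 0) ≤ 2 := by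
  have hdouble : ∀ k : ℕ, 2 * qstar x (t k + 1) ≤ qstar x (t (k + 1) + 1) := by
    intro k
    have h1 : 2 * qstar x (t k + 1) ≤ qstar x (t k + 2) := qstar_double hirr hx (hmem k)
    have h2 : t k + 2 ≤ t (k + 1) + 1 := by
      have := hmono (show k < k + 1 by omega); omega
    exact h1.trans (qstar_mono hirr hx h2)
  refine ⟨hdouble, ?_⟩
  -- growth: qstar x (t k + 1) ≥ 2 ^ k
  have hgrow : ∀ k : ℕ, (2 : ℤ) ^ k ≤ qstar x (t k + 1) := by
    intro k
    induction k with
    | zero =>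
      have := (qstar_facts_s17 hirr hx (t 0)).2
      have := (qstar_facts_s17 hirr hx (t 0)).1
      simpa using by linarith
    | succ k ih =>
      calc (2 : ℤ) ^ (k + 1) = 2 * 2 ^ k := by ring
        _ ≤ 2 * qstar x (t k + 1) := by linarith
        _ ≤ qstar x (t (k + 1) + 1) := hdouble k
  set f : ℕ → ℝ≥0∞ := fun n => if 3 ≤ bEx x n then ENNReal.ofReal (1 / (qstar x (n + 1) : ℝ)) else 0 with hf
  have hsupp : Function.support f ⊆ Set.range t := by
    intro n hn
    simp only [hf, Function.mem_support] at hn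
    by_cases h : 3 ≤ bEx x n
    · obtain ⟨k, hk⟩ := hall n h
      exact ⟨k, hk⟩
    · simp [h] at hn
  have heq : ∑' k : ℕ, f (t k) = ∑' n : ℕ, f n :=
    Function.Injective.tsum_eq hmono.injective hsupp
  rw [show (∑' n : ℕ, if 3 ≤ bEx x n then ENNReal.ofReal (1 / (qstar x (n + 1) : ℝ)) else 0) = ∑' n, f n from rfl, ← heq]
  have hbound : ∀ k : ℕ, f (t k) ≤ (2⁻¹ : ℝ≥0∞) ^ k := by
    intro k
    simp only [hf, hmem k, if_pos]
    have hq : (2 : ℤ) ^ k ≤ qstar x (t k + 1) := hgrow k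
    have hqR : (2 : ℝ) ^ k ≤ (qstar x (t k + 1) : ℝ) := by exact_mod_cast hq
    have hpos : (0 : ℝ) < 2 ^ k := by positivity
    have h1 : 1 / (qstar x (t k + 1) : ℝ) ≤ (2 : ℝ)⁻¹ ^ k := by
      rw [one_div, inv_pow]
      exact inv_anti₀ hpos hqR
    calc ENNReal.ofReal (1 / (qstar x (t k + 1) : ℝ)) ≤ ENNReal.ofReal ((2 : ℝ)⁻¹ ^ k) :=
          ENNReal.ofReal_le_ofReal h1
      _ = (2⁻¹ : ℝ≥0∞) ^ k := by
          rw [ENNReal.ofReal_pow (by norm_num), ENNReal.ofReal_inv_of_pos (by norm_num)]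
          norm_num
  calc ∑' k : ℕ, f (t k) ≤ ∑' k : ℕ, (2⁻¹ : ℝ≥0∞) ^ k := ENNReal.tsum_le_tsum hbound
    _ = (1 - 2⁻¹)⁻¹ := ENNReal.tsum_geometric _
    _ = 2 := by
        rw [ENNReal.one_sub_inv_two]
        simp
end

section
/- For every irrational x ∈ (0,1), the semi-Brjuno function satisfies the functional equation B_0(x) = log(1/x) + x·B_0(−1/x), as an identity in [0,∞] (note that −1/x is irrational and B_0(−1/x) = B_0(−1/x − ⌊−1/x⌋)). -/
open Set Filter
open scoped ENNReal

/-- The semi-Brjuno function `B_0(x) = ∑_{n≥0} β*_{n−1}·log(1/y_n) ∈ [0,∞]`, where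
`y_0 = x − ⌊x⌋`, `y_{n+1} = A_0(y_n)` and `β*_{n−1} = y_0⋯y_{n−1}` (`β*_{-1} = 1`). -/
noncomputable def B0 (x : ℝ) : ℝ≥0∞ :=
  ∑' n : ℕ, ENNReal.ofReal
    ((∏ i ∈ Finset.range n, exm^[i] (Int.fract x)) * Real.log (1 / (exm^[n] (Int.fract x))))

lemma fract_neg_inv (x : ℝ) (hirr : Irrational x) (hx : 0 < x) :
    Int.fract (-1 / x) = exm x := by
  have h1 : Irrational (1 / x) := by
    rw [one_div]; exact hirr.inv
  have hfr : Int.fract (1 / x) ≠ 0 := by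
    intro h
    exact (h1.ne_int ⌊(1 : ℝ) / x⌋) (by linarith [Int.fract_add_floor (1 / x), h])
  have hceil : ((⌈(1 : ℝ) / x⌉ : ℤ) : ℝ) = (⌊(1 : ℝ) / x⌋ : ℝ) + 1 := by
    rw [Int.ceil_eq_add_one_sub_fract hfr, Int.fract]
    ring
  have hneg : ((⌊(-1 : ℝ) / x⌋ : ℤ) : ℝ) = -((⌊(1 : ℝ) / x⌋ : ℝ) + 1) := by
    have : (-1 : ℝ) / x = -(1 / x) := by ring
    rw [this, Int.floor_neg, Int.cast_neg, hceil]
  have hfl : ((⌊(1 : ℝ) / x + 1⌋ : ℤ) : ℝ) = (⌊(1 : ℝ) / x⌋ : ℝ) + 1 := by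
    rw [Int.floor_add_one]; push_cast; ring
  unfold exm Int.fract
  rw [hneg, hfl]
  ring

/-- For every irrational `x ∈ (0,1)`, the semi-Brjuno function satisfies the
functional equation `B_0(x) = log(1/x) + x·B_0(−1/x)`, as an identity in `[0,∞]`. -/
theorem semiB_functional_equation (x : ℝ) (hirr : Irrational x)
    (hx : x ∈ Set.Ioo (0 : ℝ) 1) :
    B0 x = ENNReal.ofReal (Real.log (1 / x)) + ENNReal.ofReal x * B0 (-1 / x) := by
  obtain ⟨hx0, hx1⟩ := hx
  have hfx : Int.fract x = x := Int.fract_eq_self.2 ⟨hx0.le, hx1⟩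
  have hf : Int.fract (-1 / x) = exm x := fract_neg_inv x hirr hx0
  unfold B0
  rw [hfx, hf, tsum_eq_zero_add' ENNReal.summable]
  congr 1
  · simp
  · rw [← ENNReal.tsum_mul_left]
    congr 1
    funext n
    have hprod : ∏ i ∈ Finset.range (n + 1), exm^[i] x
        = x * ∏ i ∈ Finset.range n, exm^[i] (exm x) := by
      rw [Finset.prod_range_succ']
      simp [Function.iterate_succ_apply, mul_comm]
    rw [hprod, Function.iterate_succ_apply, mul_assoc,
      ENNReal.ofReal_mul hx0.le]
end
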